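/- If φ and ψ are elements of infinite order in GL(2,ℤ) and φ^n = ψ^n for some nonzero integer n, then φ = ψ or φ = -ψ. -/

import Mathlib

set_option maxHeartbeats 1000000

open Matrix

namespace GL2Zaux

/-! ### The Chebyshev-like sequence of a 2x2 matrix -/

def P {R : Type*} [CommRing R] (s e : R) : ℕ → R
  | 0 => 0
  | 1 => 1
  | (k+2) => s * P s e (k+1) - e * P s e k

lemma P_add_two {R : Type*} [CommRing R] (s e : R) (k : ℕ) :
    P s e (k+2) = s * P s e (k+1) - e * P s e k := rfl

lemma P_map {R S : Type*} [CommRing R] [CommRing S] (f : R →+* S) (s e : R) (k : ℕ) :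
    f (P s e k) = P (f s) (f e) k := by
  induction k using Nat.strong_induction_on with
  | _ k ih =>
    match k with
    | 0 => simp [P]
    | 1 => simp [P]
    | (k+2) =>
      rw [P_add_two, P_add_two, map_sub, _root_.map_mul, _root_.map_mul, ih (k+1) (by omega), ih k (by omega)]

lemma P_pos (s e : ℤ) (h : (e = 1 ∧ 2 ≤ s) ∨ (e = -1 ∧ 1 ≤ s)) :
    ∀ k, 0 ≤ P s e k ∧ P s e k ≤ P s e (k+1) ∧ 1 ≤ P s e (k+1) := by
  intro k
  induction k with
  | zero => simp [P]
  | succ k ih =>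
    obtain ⟨h0, h1, h2⟩ := ih
    have key : P s e (k+1) ≤ P s e (k+2) ∧ 1 ≤ P s e (k+2) := by
      rw [P_add_two]
      rcases h with ⟨he, hs⟩ | ⟨he, hs⟩ <;> subst he <;> constructor <;> nlinarith
    exact ⟨by linarith, key⟩

lemma P_neg_s (s e : ℤ) : ∀ k, P (-s) e k = (-1)^(k+1) * P s e k := by
  intro k
  induction k using Nat.strong_induction_on with
  | _ k ih =>
    match k with
    | 0 => simp [P]
    | 1 => simp [P]
    | (k+2) =>
      rw [P_add_two, P_add_two, ih (k+1) (by omega), ih k (by omega)]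
      ring

lemma P_ne_zero (s e : ℤ) (h : (e = 1 ∧ 2 ≤ |s|) ∨ (e = -1 ∧ 1 ≤ |s|)) (k : ℕ) (hk : 1 ≤ k) :
    P s e k ≠ 0 := by
  obtain ⟨k, rfl⟩ : ∃ m, k = m + 1 := ⟨k - 1, by omega⟩
  rcases le_or_gt 0 s with hs | hs
  · rw [abs_of_nonneg hs] at h
    have := (P_pos s e (by tauto) k).2.2
    omega
  · rw [abs_of_neg hs] at h
    have := (P_pos (-s) e (by rcases h with ⟨a,b⟩|⟨a,b⟩ <;> [left; right] <;> omega) k).2.2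
    have h2 := P_neg_s s e (k+1)
    rcases Nat.even_or_odd (k+2) with he | ho
    · rw [Even.neg_one_pow (by exact_mod_cast he)] at h2; omega
    · rw [Odd.neg_one_pow (by exact_mod_cast ho)] at h2; omega

/-! ### 2x2 matrix algebra -/

lemma ch2 {R : Type*} [CommRing R] (A : Matrix (Fin 2) (Fin 2) R) :
    A^2 = A.trace • A - A.det • 1 := by
  ext i j
  fin_cases i <;> fin_cases j <;>
    simp [pow_two, Matrix.mul_apply, Fin.sum_univ_two, Matrix.trace_fin_two,
      Matrix.det_fin_two, Matrix.one_apply] <;> ring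

lemma pow_formula {R : Type*} [CommRing R] (A : Matrix (Fin 2) (Fin 2) R) (t d : R)
    (h2 : A^2 = t • A - d • 1) :
    ∀ k, A^(k+1) = P t d (k+1) • A - (d * P t d k) • 1 := by
  intro k
  induction k with
  | zero => simp [P]
  | succ k ih =>
    have h : A^(k+1+1) = A^(k+1) * A := by rw [pow_succ]
    rw [h, ih, sub_mul, smul_mul_assoc, smul_mul_assoc, one_mul, ← pow_two, h2, P_add_two]
    module

lemma indep (A : Matrix (Fin 2) (Fin 2) ℚ) (hA : ∀ c : ℚ, A ≠ c • 1)
    {x y x' y' : ℚ} (h : x • A + y • (1 : Matrix (Fin 2) (Fin 2) ℚ) = x' • A + y' • 1) :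
    x = x' ∧ y = y' := by
  have hx : x = x' := by
    by_contra hx
    apply hA ((x - x')⁻¹ * (y' - y))
    have h1 : (x - x') • A = (y' - y) • (1 : Matrix (Fin 2) (Fin 2) ℚ) := by
      rw [sub_smul, sub_smul]
      linear_combination (norm := module) h
    have hxx : (x - x') ≠ 0 := sub_ne_zero.mpr hx
    rw [mul_smul, ← h1, smul_smul, inv_mul_cancel₀ hxx, one_smul]
  refine ⟨hx, ?_⟩
  subst hx
  have h2 : y • (1 : Matrix (Fin 2) (Fin 2) ℚ) = y' • 1 := add_left_cancel h
  have := congrFun (congrFun h2 0) 0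
  simpa using this

/-! ### number theory -/

lemma rat_sq_int (q : ℚ) (N : ℤ) (h : q^2 = (N : ℚ)) : ∃ k : ℤ, N = k^2 := by
  have hden : (q * q).den = q.den * q.den := Rat.mul_self_den q
  have h' : q * q = (N : ℚ) := by rw [← pow_two]; exact h
  rw [h', Rat.den_intCast] at hden
  have hd1 : q.den = 1 := by nlinarith [q.pos]
  have hq : (q.num : ℚ) = q := (Rat.den_eq_one_iff q).mp hd1
  refine ⟨q.num, ?_⟩
  have : ((q.num^2 : ℤ) : ℚ) = (N : ℚ) := by push_cast; rw [hq]; linarith [h]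
  exact_mod_cast this.symm

lemma sq_diff4 (a b : ℤ) (h : a^2 = b^2 + 4) : b = 0 := by
  by_contra hb
  have hy : 1 ≤ |b| := by have := abs_pos.mpr hb; omega
  have hx0 : 0 ≤ |a| := abs_nonneg a
  have hy0 : 0 ≤ |b| := abs_nonneg b
  have hsq : |a|^2 = |b|^2 + 4 := by rw [sq_abs, sq_abs]; exact h
  have hgt : |b| < |a| := by nlinarith
  have hge : |b| + 1 ≤ |a| := hgt
  have hy1 : |b| ≤ 1 := by nlinarith
  have hb1 : |b| = 1 := le_antisymm hy1 hy
  rw [hb1] at hsq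
  have h2 : |a| ≤ 2 := by nlinarith
  have h3 : 3 ≤ |a| := by nlinarith
  omega

lemma not_sq_12 (k : ℤ) (h : k^2 = 12) : False := by
  have h2 : |k| ≤ 3 := by nlinarith [sq_abs k, abs_nonneg k]
  have h3 : 4 ≤ |k| := by nlinarith [sq_abs k, abs_nonneg k]
  omega

lemma not_sq_3 (k : ℤ) (h : k^2 = 3) : False := by
  have h2 : |k| ≤ 1 := by nlinarith [sq_abs k, abs_nonneg k]
  have h3 : 2 ≤ |k| := by nlinarith [sq_abs k, abs_nonneg k]
  omega

lemma arith (t d s e : ℤ) (u : ℚ) (hu : u ≠ 0)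
    (hd : d = 1 ∨ d = -1)
    (hse : (e = 1 ∧ (s = 0 ∨ s = 1 ∨ s = -1)) ∨ (e = -1 ∧ s = 0))
    (key : u^2 * (4*(d:ℚ) - (t:ℚ)^2) = 4*(e:ℚ) - (s:ℚ)^2) :
    (t = 0 ∧ d = -1) ∨ (t = 0 ∧ d = 1) ∨ (t = 1 ∧ d = 1) ∨ (t = -1 ∧ d = 1) := by
  have hu2 : 0 < u^2 := by positivity
  rcases hse with ⟨rfl, hs⟩ | ⟨rfl, rfl⟩
  · have hrhs : (0:ℚ) < 4*((1:ℤ):ℚ) - (s:ℚ)^2 := by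
      rcases hs with rfl | rfl | rfl <;> norm_num
    have hMq : (0:ℚ) < 4*(d:ℚ) - (t:ℚ)^2 := by
      by_contra hn
      push_neg at hn
      nlinarith
    have hd1 : d = 1 := by
      rcases hd with rfl | rfl
      · rfl
      · exfalso
        have ht0 : (0:ℚ) ≤ (t:ℚ)^2 := sq_nonneg _
        norm_num at hMq
        nlinarith
    subst hd1
    have hMq' : ((t:ℚ))^2 < 4 := by push_cast at hMq; linarith
    have ht : t = 0 ∨ t = 1 ∨ t = -1 := by
      have h1 : -1 ≤ t := by
        by_contra hc
        push_neg at hc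
        have : (t:ℚ) ≤ -2 := by exact_mod_cast (by omega : t ≤ -2)
        nlinarith [sq_nonneg ((t:ℚ)+2), hMq']
      have h2 : t ≤ 1 := by
        by_contra hc
        push_neg at hc
        have : (2:ℚ) ≤ (t:ℚ) := by exact_mod_cast (by omega : 2 ≤ t)
        nlinarith [sq_nonneg ((t:ℚ)-2), hMq']
      omega
    rcases ht with rfl | rfl | rfl
    · rcases hs with rfl | rfl | rfl
      · exact Or.inr (Or.inl ⟨rfl, rfl⟩)
      · exfalso
        have : (2*u)^2 = ((3:ℤ):ℚ) := by push_cast; push_cast at key; nlinarith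
        obtain ⟨k, hk⟩ := rat_sq_int _ _ this
        exact not_sq_3 k hk.symm
      · exfalso
        have : (2*u)^2 = ((3:ℤ):ℚ) := by push_cast; push_cast at key; nlinarith
        obtain ⟨k, hk⟩ := rat_sq_int _ _ this
        exact not_sq_3 k hk.symm
    · rcases hs with rfl | rfl | rfl
      · exfalso
        have : (3*u)^2 = ((12:ℤ):ℚ) := by push_cast; push_cast at key; nlinarith
        obtain ⟨k, hk⟩ := rat_sq_int _ _ this
        exact not_sq_12 k hk.symm
      · exact Or.inr (Or.inr (Or.inl ⟨rfl, rfl⟩))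
      · exact Or.inr (Or.inr (Or.inl ⟨rfl, rfl⟩))
    · rcases hs with rfl | rfl | rfl
      · exfalso
        have : (3*u)^2 = ((12:ℤ):ℚ) := by push_cast; push_cast at key; nlinarith
        obtain ⟨k, hk⟩ := rat_sq_int _ _ this
        exact not_sq_12 k hk.symm
      · exact Or.inr (Or.inr (Or.inr ⟨rfl, rfl⟩))
      · exact Or.inr (Or.inr (Or.inr ⟨rfl, rfl⟩))
  · have hsq : (u * ((t:ℚ)^2 - 4*(d:ℚ)) / 2)^2 = (((t^2 - 4*d : ℤ)) : ℚ) := by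
      push_cast
      push_cast at key
      have expand : (u * ((t:ℚ)^2 - 4*(d:ℚ)) / 2)^2
          = (u^2 * (4*(d:ℚ) - (t:ℚ)^2)) * -(((t:ℚ)^2 - 4*(d:ℚ))) / 4 := by ring
      rw [expand, key]
      ring
    obtain ⟨k, hk⟩ := rat_sq_int _ _ hsq
    rcases hd with rfl | rfl
    · exfalso
      have hk0 : k = 0 := sq_diff4 t k (by omega)
      subst hk0
      have ht4 : t^2 = 4 := by omega
      have : ((t:ℚ))^2 = 4 := by exact_mod_cast ht4
      rw [this] at key
      norm_num at key
    · have ht : t = 0 := sq_diff4 k t (by omega)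
      exact Or.inl ⟨ht, rfl⟩

/-! ### the embedding GL(2,Z) → M₂(Q) -/

noncomputable def f : GL (Fin 2) ℤ →* Matrix (Fin 2) (Fin 2) ℚ :=
  ((Int.castRingHom ℚ).mapMatrix.toMonoidHom).comp (Units.coeHom _)

lemma f_apply (φ : GL (Fin 2) ℤ) : f φ = (φ : Matrix (Fin 2) (Fin 2) ℤ).map (Int.cast) := rfl

lemma f_inj : Function.Injective f := by
  intro a b hab
  apply Units.ext
  exact Matrix.map_injective Int.cast_injective hab

lemma f_neg (φ : GL (Fin 2) ℤ) : f (-φ) = - f φ := by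
  rw [f_apply, f_apply]
  have h : ((-φ : GL (Fin 2) ℤ) : Matrix (Fin 2) (Fin 2) ℤ) = -(φ : Matrix (Fin 2) (Fin 2) ℤ) :=
    Units.val_neg φ
  rw [h]
  ext i j
  simp

lemma f_det (φ : GL (Fin 2) ℤ) : det (f φ) = ((det (φ : Matrix (Fin 2) (Fin 2) ℤ) : ℤ) : ℚ) := by
  rw [f_apply]
  exact ((Int.castRingHom ℚ).map_det _).symm

lemma f_trace (φ : GL (Fin 2) ℤ) :
    trace (f φ) = ((trace (φ : Matrix (Fin 2) (Fin 2) ℤ) : ℤ) : ℚ) := by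
  rw [f_apply]
  simp [Matrix.trace, Matrix.diag]

lemma det_unit (φ : GL (Fin 2) ℤ) :
    det (φ : Matrix (Fin 2) (Fin 2) ℤ) = 1 ∨ det (φ : Matrix (Fin 2) (Fin 2) ℤ) = -1 := by
  have h1 : det ((φ : Matrix (Fin 2) (Fin 2) ℤ) * ((φ⁻¹ : GL (Fin 2) ℤ) : Matrix (Fin 2) (Fin 2) ℤ)) = 1 := by
    rw [← Units.val_mul, mul_inv_cancel]; simp
  rw [det_mul] at h1
  exact Int.isUnit_iff.mp (IsUnit.of_mul_eq_one _ h1)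

lemma fin_ord (φ : GL (Fin 2) ℤ) (k : ℕ) (hk : 1 ≤ k) (h : (f φ)^k = 1) : IsOfFinOrder φ := by
  rw [isOfFinOrder_iff_pow_eq_one]
  refine ⟨k, by omega, f_inj ?_⟩
  rw [map_pow, h, _root_.map_one]

lemma scalar_pow (φ : GL (Fin 2) ℤ) (k : ℕ) (hk : 1 ≤ k) (c : ℚ)
    (h : (f φ)^k = c • 1) : IsOfFinOrder φ := by
  have hdet : det ((f φ)^k) = c^2 := by
    rw [h, Matrix.det_smul]
    simp
  rw [det_pow, f_det] at hdet
  have hc2 : c^2 = 1 := by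
    rcases det_unit φ with h1 | h1 <;> rw [h1] at hdet <;> push_cast at hdet
    · simpa using hdet.symm
    · rcases Nat.even_or_odd k with he | ho
      · rw [he.neg_one_pow] at hdet; linarith
      · rw [ho.neg_one_pow] at hdet; nlinarith [sq_nonneg c]
  apply fin_ord φ (2*k) (by omega)
  rw [mul_comm 2 k, pow_mul, h, smul_pow, one_pow, hc2, one_smul]

lemma nonscalar (φ : GL (Fin 2) ℤ) (hφ : ¬ IsOfFinOrder φ) (c : ℚ) : f φ ≠ c • 1 :=
  fun hc => hφ (scalar_pow φ 1 le_rfl c (by rwa [pow_one]))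

lemma f_sq (φ : GL (Fin 2) ℤ) :
    (f φ)^2 = (((φ : Matrix (Fin 2) (Fin 2) ℤ).trace : ℤ) : ℚ) • f φ
      - (((φ : Matrix (Fin 2) (Fin 2) ℤ).det : ℤ) : ℚ) • 1 := by
  rw [ch2 (f φ), f_trace, f_det]

lemma f_pow (φ : GL (Fin 2) ℤ) (k : ℕ) :
    (f φ)^(k+1)
      = ((P (φ : Matrix (Fin 2) (Fin 2) ℤ).trace (φ : Matrix (Fin 2) (Fin 2) ℤ).det (k+1) : ℤ) : ℚ) • f φ
      - (((φ : Matrix (Fin 2) (Fin 2) ℤ).det * P (φ : Matrix (Fin 2) (Fin 2) ℤ).trace (φ : Matrix (Fin 2) (Fin 2) ℤ).det k : ℤ) : ℚ) • 1 := by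
  have h := pow_formula (f φ) _ _ (f_sq φ) k
  rw [h]
  have c1 := P_map (Int.castRingHom ℚ) (φ : Matrix (Fin 2) (Fin 2) ℤ).trace
    (φ : Matrix (Fin 2) (Fin 2) ℤ).det (k+1)
  have c2 := P_map (Int.castRingHom ℚ) (φ : Matrix (Fin 2) (Fin 2) ℤ).trace
    (φ : Matrix (Fin 2) (Fin 2) ℤ).det k
  simp only [Int.coe_castRingHom] at c1 c2
  rw [← c1, ← c2, Int.cast_mul]

end GL2Zaux

open GL2Zaux in
theorem roots_unique_GL2Z (φ ψ : GL (Fin 2) ℤ)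
    (hφ : ¬ IsOfFinOrder φ) (hψ : ¬ IsOfFinOrder ψ)
    (n : ℤ) (hn : n ≠ 0) (h : φ ^ n = ψ ^ n) :
    φ = ψ ∨ φ = -ψ := by
  classical
  -- reduce to a positive natural power
  obtain ⟨k, hm⟩ : ∃ k : ℕ, φ ^ (k+1) = ψ ^ (k+1) := by
    refine ⟨n.natAbs - 1, ?_⟩
    have hna : n.natAbs - 1 + 1 = n.natAbs := by omega
    rw [hna]
    rcases Int.natAbs_eq n with he | he
    · rw [he, zpow_natCast, zpow_natCast] at h; exact h
    · rw [he, _root_.zpow_neg, _root_.zpow_neg, zpow_natCast, zpow_natCast, _root_.inv_inj] at h; exact h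
  set A : Matrix (Fin 2) (Fin 2) ℚ := f φ with hA
  set B : Matrix (Fin 2) (Fin 2) ℚ := f ψ with hBdef
  set tA : ℤ := (φ : Matrix (Fin 2) (Fin 2) ℤ).trace with htA
  set dA : ℤ := (φ : Matrix (Fin 2) (Fin 2) ℤ).det with hdA
  set tB : ℤ := (ψ : Matrix (Fin 2) (Fin 2) ℤ).trace with htB
  set dB : ℤ := (ψ : Matrix (Fin 2) (Fin 2) ℤ).det with hdB
  have hA2 : A^2 = ((tA:ℤ):ℚ) • A - ((dA:ℤ):ℚ) • 1 := f_sq φ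
  have hB2 : B^2 = ((tB:ℤ):ℚ) • B - ((dB:ℤ):ℚ) • 1 := f_sq ψ
  set pA : ℚ := ((P tA dA (k+1) : ℤ) : ℚ) with hpAdef
  set qA : ℚ := ((dA * P tA dA k : ℤ) : ℚ) with hqAdef
  set pB : ℚ := ((P tB dB (k+1) : ℤ) : ℚ) with hpBdef
  set qB : ℚ := ((dB * P tB dB k : ℤ) : ℚ) with hqBdef
  have hAm : A^(k+1) = pA • A - qA • 1 := f_pow φ k
  have hBm : B^(k+1) = pB • B - qB • 1 := f_pow ψ k
  have hpA : pA ≠ 0 := by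
    intro h0
    apply hφ
    apply scalar_pow φ (k+1) (by omega) (-qA)
    rw [hAm, h0, zero_smul, zero_sub, neg_smul]
  have hpB : pB ≠ 0 := by
    intro h0
    apply hψ
    apply scalar_pow ψ (k+1) (by omega) (-qB)
    rw [hBm, h0, zero_smul, zero_sub, neg_smul]
  have hmQ : A^(k+1) = B^(k+1) := by rw [hA, hBdef, ← map_pow, ← map_pow, hm]
  -- B is a linear combination of 1 and A
  set x : ℚ := pB⁻¹ * pA with hxdef
  set y : ℚ := pB⁻¹ * (qB - qA) with hydef
  have hBlin : B = x • A + y • 1 := by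
    have h0 : pB • B = pA • A + (qB - qA) • 1 := by
      have e := hAm.symm.trans (hmQ.trans hBm)
      linear_combination (norm := module) -e
    have h1 : B = pB⁻¹ • (pA • A + (qB - qA) • 1) := by
      rw [← h0, smul_smul, inv_mul_cancel₀ hpB, one_smul]
    rw [h1, smul_add, smul_smul, smul_smul]
  have hcommQ : A * B = B * A := by
    rw [hBlin]
    simp only [mul_add, add_mul, mul_smul_comm, smul_mul_assoc, mul_one, one_mul]
  have hcomm : Commute φ ψ := by
    have : f (φ * ψ) = f (ψ * φ) := by rw [_root_.map_mul, _root_.map_mul]; exact hcommQ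
    exact f_inj this
  set C : GL (Fin 2) ℤ := φ * ψ⁻¹ with hCdef
  have hCm : C^(k+1) = 1 := by
    rw [hCdef, (hcomm.inv_right).mul_pow, inv_pow, hm, mul_inv_cancel]
  -- express f C as a combination of 1 and A
  set B' : Matrix (Fin 2) (Fin 2) ℚ := f ψ⁻¹ with hB'def
  have hBB' : B * B' = 1 := by rw [hBdef, hB'def, ← _root_.map_mul, mul_inv_cancel, _root_.map_one]
  have hB'B : B' * B = 1 := by rw [hBdef, hB'def, ← _root_.map_mul, inv_mul_cancel, _root_.map_one]
  have hdBq : ((dB:ℤ):ℚ) ≠ 0 := by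
    rcases det_unit ψ with h1 | h1 <;> rw [← hdB] at h1 <;> rw [h1] <;> norm_num
  have hB'eq : B' = ((dB:ℤ):ℚ)⁻¹ • (((tB:ℤ):ℚ) • 1 - B) := by
    have hcand : B * (((dB:ℤ):ℚ)⁻¹ • (((tB:ℤ):ℚ) • 1 - B)) = 1 := by
      rw [mul_smul_comm, mul_sub, mul_smul_comm, mul_one, ← pow_two, hB2, sub_sub_cancel,
        smul_smul, inv_mul_cancel₀ hdBq, one_smul]
    calc B' = B' * (B * (((dB:ℤ):ℚ)⁻¹ • (((tB:ℤ):ℚ) • 1 - B))) := by rw [hcand, mul_one]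
    _ = (B' * B) * (((dB:ℤ):ℚ)⁻¹ • (((tB:ℤ):ℚ) • 1 - B)) := by rw [mul_assoc]
    _ = ((dB:ℤ):ℚ)⁻¹ • (((tB:ℤ):ℚ) • 1 - B) := by rw [hB'B, one_mul]
  set u : ℚ := ((dB:ℤ):ℚ)⁻¹ * (((tB:ℤ):ℚ) - x*((tA:ℤ):ℚ) - y) with hudef
  set v : ℚ := ((dB:ℤ):ℚ)⁻¹ * (x*((dA:ℤ):ℚ)) with hvdef
  have hfC : f C = u • A + v • 1 := by
    have h1 : f C = A * B' := by rw [hCdef, _root_.map_mul]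
    rw [h1, hB'eq, hBlin]
    rw [mul_smul_comm, mul_sub, mul_smul_comm, mul_one, mul_add, mul_smul_comm, mul_smul_comm,
      mul_one, ← pow_two, hA2]
    rw [hudef, hvdef]
    module
  rcases eq_or_ne u 0 with hu | hu
  · -- f C is scalar : φ = ± ψ
    rw [hu, zero_smul, zero_add] at hfC
    have hACB : f C * B = A := by
      rw [hA, hBdef, hCdef, ← _root_.map_mul, inv_mul_cancel_right]
    have hAvB : A = v • B := by
      rw [← hACB, hfC, smul_mul_assoc, one_mul]
    have hdet : ((dA:ℤ):ℚ) = v^2 * ((dB:ℤ):ℚ) := by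
      have h1 : det A = ((dA:ℤ):ℚ) := f_det φ
      have h2 : det B = ((dB:ℤ):ℚ) := f_det ψ
      rw [← h1, ← h2, hAvB, Matrix.det_smul]
      norm_num
    have hv : v = 1 ∨ v = -1 := by
      have hv2 : v^2 = 1 := by
        rcases det_unit φ with h1 | h1 <;> rcases det_unit ψ with h2 | h2 <;>
          rw [← hdA] at h1 <;> rw [← hdB] at h2 <;> rw [h1, h2] at hdet <;>
          push_cast at hdet <;> nlinarith [sq_nonneg v]
      have : (v-1)*(v+1) = 0 := by nlinarith
      rcases mul_eq_zero.mp this with h' | h'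
      · left; linarith
      · right; linarith
    rcases hv with hv1 | hv1 <;> rw [hv1] at hAvB
    · left
      apply f_inj
      rw [← hA, ← hBdef, hAvB, one_smul]
    · right
      apply f_inj
      rw [← hA, f_neg, ← hBdef, hAvB]
      module
  · -- f C non-scalar : contradiction with infinite order of φ
    exfalso
    set sC : ℤ := (C : Matrix (Fin 2) (Fin 2) ℤ).trace with hsC
    set eC : ℤ := (C : Matrix (Fin 2) (Fin 2) ℤ).det with heC
    have hnsA : ∀ c : ℚ, A ≠ c • 1 := nonscalar φ hφ
    have hnsC : ∀ c : ℚ, f C ≠ c • 1 := by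
      intro c hc
      have h1 : u • A + v • (1 : Matrix (Fin 2) (Fin 2) ℚ) = (0:ℚ) • A + c • 1 := by
        rw [← hfC, hc, zero_smul, zero_add]
      exact hu (indep A hnsA h1).1
    -- from C^(k+1) = 1, get P sC eC (k+1) = 0
    have hCmQ : (f C)^(k+1) = 1 := by rw [← map_pow, hCm, _root_.map_one]
    have hCpow := f_pow C k
    rw [hCmQ] at hCpow
    rw [← hsC, ← heC] at hCpow
    have h1 : ((P sC eC (k+1) : ℤ):ℚ) • f C + (-(((eC * P sC eC k : ℤ):ℚ))) • (1 : Matrix (Fin 2) (Fin 2) ℚ)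
        = (0:ℚ) •f C + (1:ℚ) • 1 := by
      rw [zero_smul, zero_add, one_smul]
      linear_combination (norm := module) -hCpow
    have hP0 : P sC eC (k+1) = 0 := by exact_mod_cast (indep (f C) hnsC h1).1
    have hEC : eC = 1 ∨ eC = -1 := det_unit C
    have hse : (eC = 1 ∧ (sC = 0 ∨ sC = 1 ∨ sC = -1)) ∨ (eC = -1 ∧ sC = 0) := by
      have hne : ¬ ((eC = 1 ∧ 2 ≤ |sC|) ∨ (eC = -1 ∧ 1 ≤ |sC|)) := by
        intro hh
        exact P_ne_zero sC eC hh (k+1) (by omega) hP0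
      push_neg at hne
      rcases hEC with h1' | h1'
      · left
        refine ⟨h1', ?_⟩
        have := hne.1 h1'
        have h2 := abs_lt.mp (by omega : |sC| < 2)
        omega
      · right
        refine ⟨h1', ?_⟩
        have := hne.2 h1'
        have h2 := abs_lt.mp (by omega : |sC| < 1)
        omega
    -- expand the quadratic relation of f C
    have hC2 : (f C)^2 = ((sC:ℤ):ℚ) • f C - ((eC:ℤ):ℚ) • 1 := f_sq C
    have hlhs : (f C)^2 = (u^2*((tA:ℤ):ℚ) + 2*u*v) • A + (v^2 - u^2*((dA:ℤ):ℚ)) • 1 := by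
      rw [hfC, pow_two]
      have e1 : (u • A + v • (1 : Matrix (Fin 2) (Fin 2) ℚ)) * (u • A + v • 1)
          = (u*u) • (A*A) + (u*v) • A + (v*u) • A + (v*v) • 1 := by
        simp only [mul_add, add_mul, smul_mul_assoc, mul_smul_comm, smul_smul, mul_one, one_mul]
        module
      rw [e1, show A*A = A^2 from (pow_two A).symm, hA2]
      module
    have hrhs : (f C)^2 = (((sC:ℤ):ℚ)*u) • A + (((sC:ℤ):ℚ)*v - ((eC:ℤ):ℚ)) • 1 := by
      rw [hC2, hfC]
      module
    have heqn := hlhs.symm.trans hrhs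
    obtain ⟨eq1, eq2⟩ := indep A hnsA heqn
    have e1' : u*((tA:ℤ):ℚ) + 2*v = ((sC:ℤ):ℚ) := by
      apply mul_left_cancel₀ hu
      linear_combination eq1
    have key : u^2 * (4*((dA:ℤ):ℚ) - ((tA:ℤ):ℚ)^2) = 4*((eC:ℤ):ℚ) - ((sC:ℤ):ℚ)^2 := by
      linear_combination (-4:ℚ)*eq2 + (2*v - u*((tA:ℤ):ℚ) - ((sC:ℤ):ℚ))*e1'
    have hfin := arith tA dA sC eC u hu (by rw [hdA]; exact det_unit φ) hse key
    -- in all four cases φ has finite order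
    apply hφ
    apply fin_ord φ 12 (by norm_num)
    have h12 := f_pow φ 11
    rw [show (12:ℕ) = 11+1 from rfl, h12, ← htA, ← hdA]
    rcases hfin with ⟨ht, hd⟩ | ⟨ht, hd⟩ | ⟨ht, hd⟩ | ⟨ht, hd⟩ <;> rw [ht, hd]
    · rw [show P (0:ℤ) (-1) 12 = 0 from by decide, show ((-1) * P (0:ℤ) (-1) 11 : ℤ) = -1 from by decide]
      norm_num
    · rw [show P (0:ℤ) (1:ℤ) 12 = 0 from by decide, show ((1:ℤ) * P (0:ℤ) (1:ℤ) 11 : ℤ) = -1 from by decide]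
      norm_num
    · rw [show P (1:ℤ) (1:ℤ) 12 = 0 from by decide, show ((1:ℤ) * P (1:ℤ) (1:ℤ) 11 : ℤ) = -1 from by decide]
      norm_num
    · rw [show P (-1:ℤ) (1:ℤ) 12 = 0 from by decide, show ((1:ℤ) * P (-1:ℤ) (1:ℤ) 11 : ℤ) = -1 from by decide]
      norm_num
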